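/- Exact interval inverse via boundary matrices: Let A_c, Δ ∈ ℝ^{n×n} with Δ ≥ 0 entrywise, and suppose the interval matrix [A_c − Δ, A_c + Δ] is regular, i.e., every real matrix A with |A − A_c| ≤ Δ entrywise is invertible. For sign vectors y, z ∈ {−1,1}^n define A_{yz} = A_c − D_y Δ D_z, where D_y and D_z are the diagonal matrices with diagonals y and z. Then for every pair of indices (i,j): min over all A in the interval matrix of (A^{-1})_{ij} equals min over all y, z ∈ {−1,1}^n of ((A_{yz})^{-1})_{ij}, and max over all A in the interval matrix of (A^{-1})_{ij} equals max over all y, z ∈ {−1,1}^n of ((A_{yz})^{-1})_{ij}. -/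

import Mathlib

open Set Matrix

lemma mobius_between (n0 n1 d0 d1 : ℝ)
    (hd : ∀ s ∈ Icc (-1:ℝ) 1, d0 + s * d1 ≠ 0) (s : ℝ) (hs : s ∈ Icc (-1:ℝ) 1) :
    min ((n0 + (-1) * n1) / (d0 + (-1) * d1)) ((n0 + 1 * n1) / (d0 + 1 * d1))
      ≤ (n0 + s * n1) / (d0 + s * d1) ∧
    (n0 + s * n1) / (d0 + s * d1)
      ≤ max ((n0 + (-1) * n1) / (d0 + (-1) * d1)) ((n0 + 1 * n1) / (d0 + 1 * d1)) := by
  obtain ⟨hs1, hs2⟩ := hs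
  have hm : d0 + (-1) * d1 ≠ 0 := hd (-1) ⟨le_refl _, by norm_num⟩
  have hp : d0 + 1 * d1 ≠ 0 := hd 1 ⟨by norm_num, le_refl _⟩
  have hss : d0 + s * d1 ≠ 0 := hd s ⟨hs1, hs2⟩
  have hsign : 0 < (d0 + (-1) * d1) * (d0 + 1 * d1) := by
    rcases lt_or_gt_of_ne hm with h1 | h1 <;> rcases lt_or_gt_of_ne hp with h2 | h2
    · exact mul_pos_of_neg_of_neg h1 h2
    · exfalso
      have hc : ContinuousOn (fun u : ℝ => d0 + u * d1) (Icc (-1) 1) := by fun_prop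
      obtain ⟨u, hu, hu0⟩ := intermediate_value_Icc (by norm_num : (-1:ℝ) ≤ 1) hc
        (⟨h1.le, h2.le⟩ : (0:ℝ) ∈ Icc (d0 + (-1) * d1) (d0 + 1 * d1))
      exact hd u hu hu0
    · exfalso
      have hc : ContinuousOn (fun u : ℝ => d0 + u * d1) (Icc (-1) 1) := by fun_prop
      obtain ⟨u, hu, hu0⟩ := intermediate_value_Icc' (by norm_num : (-1:ℝ) ≤ 1) hc
        (⟨h2.le, h1.le⟩ : (0:ℝ) ∈ Icc (d0 + 1 * d1) (d0 + (-1) * d1))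
      exact hd u hu hu0
    · exact mul_pos h1 h2
  have e1 : (n0 + s * n1) / (d0 + s * d1) - (n0 + (-1) * n1) / (d0 + (-1) * d1)
      = ((n0 * d1 - n1 * d0) * (-1 - s)) / ((d0 + s * d1) * (d0 + (-1) * d1)) := by
    rw [div_sub_div _ _ hss hm]
    congr 1
    ring
  have e2 : (n0 + 1 * n1) / (d0 + 1 * d1) - (n0 + s * n1) / (d0 + s * d1)
      = ((n0 * d1 - n1 * d0) * (s - 1)) / ((d0 + 1 * d1) * (d0 + s * d1)) := by
    rw [div_sub_div _ _ hp hss]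
    congr 1
    ring
  have key : 0 ≤ ((n0 + s * n1) / (d0 + s * d1) - (n0 + (-1) * n1) / (d0 + (-1) * d1)) *
      ((n0 + 1 * n1) / (d0 + 1 * d1) - (n0 + s * n1) / (d0 + s * d1)) := by
    rw [e1, e2, div_mul_div_comm]
    have enum : (n0 * d1 - n1 * d0) * (-1 - s) * ((n0 * d1 - n1 * d0) * (s - 1))
        = (n0 * d1 - n1 * d0)^2 * ((1 + s) * (1 - s)) := by ring
    have eden : (d0 + s * d1) * (d0 + (-1) * d1) * ((d0 + 1 * d1) * (d0 + s * d1))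
        = ((d0 + (-1) * d1) * (d0 + 1 * d1)) * (d0 + s * d1)^2 := by ring
    rw [enum, eden]
    apply div_nonneg
    · have h1 : (0:ℝ) ≤ 1 + s := by linarith
      have h2 : (0:ℝ) ≤ 1 - s := by linarith
      positivity
    · have h3 : (0:ℝ) < (d0 + s * d1)^2 := by positivity
      positivity
  rcases mul_nonneg_iff.mp key with ⟨h1, h2⟩ | ⟨h1, h2⟩
  · refine ⟨le_trans (min_le_left _ _) (by linarith), le_trans (by linarith) (le_max_right _ _)⟩
  · refine ⟨le_trans (min_le_right _ _) (by linarith), le_trans (by linarith) (le_max_left _ _)⟩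

lemma bmat_apply {n : ℕ} (Ac Δ : Matrix (Fin n) (Fin n) ℝ) (t z : Fin n → ℝ) (k l : Fin n) :
    (Ac - Matrix.diagonal t * Δ * Matrix.diagonal z) k l = Ac k l - t k * Δ k l * z l := by
  simp [Matrix.sub_apply, Matrix.mul_diagonal, Matrix.diagonal_mul, mul_assoc]

lemma bmat_mem {n : ℕ} (Ac Δ : Matrix (Fin n) (Fin n) ℝ) (hΔ : ∀ i j, 0 ≤ Δ i j)
    (t z : Fin n → ℝ) (ht : ∀ m, |t m| ≤ 1) (hz : ∀ m, |z m| ≤ 1) (k l : Fin n) :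
    |(Ac - Matrix.diagonal t * Δ * Matrix.diagonal z) k l - Ac k l| ≤ Δ k l := by
  rw [bmat_apply]
  have : Ac k l - t k * Δ k l * z l - Ac k l = -(t k * Δ k l * z l) := by ring
  rw [this, abs_neg, abs_mul, abs_mul, abs_of_nonneg (hΔ k l)]
  calc |t k| * Δ k l * |z l| ≤ 1 * Δ k l * 1 := by
        apply mul_le_mul (mul_le_mul_of_nonneg_right (ht k) (hΔ k l)) (hz l) (abs_nonneg _)
        simpa using hΔ k l
    _ = Δ k l := by ring

lemma inv_entry_eq {n : ℕ} (A : Matrix (Fin n) (Fin n) ℝ) (i j : Fin n) :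
    A⁻¹ i j = A.adjugate i j / A.det := by
  rw [Matrix.inv_def, Ring.inverse_eq_inv, Matrix.smul_apply, smul_eq_mul, div_eq_inv_mul]

lemma coord_bound {n : ℕ} (Ac Δ : Matrix (Fin n) (Fin n) ℝ) (hΔ : ∀ i j, 0 ≤ Δ i j)
    (hReg : ∀ A : Matrix (Fin n) (Fin n) ℝ,
      (∀ i j, |A i j - Ac i j| ≤ Δ i j) → IsUnit A)
    (i j : Fin n) (z : Fin n → ℝ) (hz : ∀ m, |z m| ≤ 1)
    (t : Fin n → ℝ) (ht : ∀ m, |t m| ≤ 1) (k : Fin n) :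
    min ((Ac - Matrix.diagonal (Function.update t k (-1)) * Δ * Matrix.diagonal z)⁻¹ i j)
        ((Ac - Matrix.diagonal (Function.update t k 1) * Δ * Matrix.diagonal z)⁻¹ i j)
      ≤ (Ac - Matrix.diagonal t * Δ * Matrix.diagonal z)⁻¹ i j ∧
    (Ac - Matrix.diagonal t * Δ * Matrix.diagonal z)⁻¹ i j
      ≤ max ((Ac - Matrix.diagonal (Function.update t k (-1)) * Δ * Matrix.diagonal z)⁻¹ i j)
          ((Ac - Matrix.diagonal (Function.update t k 1) * Δ * Matrix.diagonal z)⁻¹ i j) := by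
  set B := Ac - Matrix.diagonal t * Δ * Matrix.diagonal z with hB
  set r0 : Fin n → ℝ := fun l => Ac k l with hr0
  set r1 : Fin n → ℝ := fun l => -(Δ k l * z l) with hr1
  -- the matrix as a function of the k-th parameter
  have hAs : ∀ s : ℝ, (Ac - Matrix.diagonal (Function.update t k s) * Δ * Matrix.diagonal z)
      = Matrix.updateRow B k (r0 + s • r1) := by
    intro s
    ext m l
    by_cases h : m = k
    · subst h
      rw [Matrix.updateRow_self]
      rw [bmat_apply]
      simp [hr0, hr1, Function.update_self]
      ring
    · rw [Matrix.updateRow_ne h]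
      rw [bmat_apply, hB, bmat_apply]
      rw [Function.update_of_ne h]
  -- determinant is affine in s
  set d0 : ℝ := (Matrix.updateRow B k r0).det with hd0
  set d1 : ℝ := (Matrix.updateRow B k r1).det with hd1
  have hdet : ∀ s : ℝ,
      (Ac - Matrix.diagonal (Function.update t k s) * Δ * Matrix.diagonal z).det
        = d0 + s * d1 := by
    intro s
    rw [hAs s, Matrix.det_updateRow_add, Matrix.det_updateRow_smul]
  -- adjugate entry is affine in s
  obtain ⟨a0, a1, hadj⟩ : ∃ a0 a1 : ℝ, ∀ s : ℝ,
      (Ac - Matrix.diagonal (Function.update t k s) * Δ * Matrix.diagonal z).adjugate i j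
        = a0 + s * a1 := by
    by_cases hkj : k = j
    · subst hkj
      refine ⟨(Matrix.updateRow B k (Pi.single i 1)).det, 0, fun s => ?_⟩
      rw [Matrix.adjugate_apply, hAs s]
      have : Matrix.updateRow (Matrix.updateRow B k (r0 + s • r1)) k (Pi.single i 1)
          = Matrix.updateRow B k (Pi.single i 1) := by
        ext m l
        by_cases h : m = k
        · subst h; rw [Matrix.updateRow_self, Matrix.updateRow_self]
        · rw [Matrix.updateRow_ne h, Matrix.updateRow_ne h, Matrix.updateRow_ne h]
      rw [this]; ring
    · refine ⟨(Matrix.updateRow (Matrix.updateRow B j (Pi.single i 1)) k r0).det,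
        (Matrix.updateRow (Matrix.updateRow B j (Pi.single i 1)) k r1).det, fun s => ?_⟩
      rw [Matrix.adjugate_apply, hAs s]
      have hcomm : Matrix.updateRow (Matrix.updateRow B k (r0 + s • r1)) j (Pi.single i 1)
          = Matrix.updateRow (Matrix.updateRow B j (Pi.single i 1)) k (r0 + s • r1) := by
        ext m l
        by_cases h1 : m = k
        · subst h1
          rw [Matrix.updateRow_ne hkj, Matrix.updateRow_self, Matrix.updateRow_self]
        · rw [Matrix.updateRow_ne h1]
          by_cases h2 : m = j
          · subst h2; rw [Matrix.updateRow_self, Matrix.updateRow_self]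
          · rw [Matrix.updateRow_ne h2, Matrix.updateRow_ne h2, Matrix.updateRow_ne h1]
      rw [hcomm, Matrix.det_updateRow_add, Matrix.det_updateRow_smul]
  -- denominator never vanishes on [-1,1]
  have hdne : ∀ s ∈ Icc (-1:ℝ) 1, d0 + s * d1 ≠ 0 := by
    intro s hs
    rw [← hdet s]
    have hmem : ∀ p q, |(Ac - Matrix.diagonal (Function.update t k s) * Δ *
        Matrix.diagonal z) p q - Ac p q| ≤ Δ p q := by
      intro p q
      apply bmat_mem Ac Δ hΔ _ _ _ hz
      intro m
      by_cases h : m = k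
      · subst h; rw [Function.update_self]; rw [abs_le]; exact ⟨hs.1, hs.2⟩
      · rw [Function.update_of_ne h]; exact ht m
    have := hReg _ hmem
    rw [Matrix.isUnit_iff_isUnit_det, isUnit_iff_ne_zero] at this
    exact this
  -- the inverse entry as a Möbius function
  have hF : ∀ s : ℝ, (Ac - Matrix.diagonal (Function.update t k s) * Δ *
      Matrix.diagonal z)⁻¹ i j = (a0 + s * a1) / (d0 + s * d1) := by
    intro s
    rw [inv_entry_eq, hadj s, hdet s]
  have htk : t k ∈ Icc (-1:ℝ) 1 := abs_le.mp (ht k)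
  have := mobius_between a0 a1 d0 d1 hdne (t k) htk
  rw [← hF (-1), ← hF 1, ← hF (t k)] at this
  rwa [Function.update_eq_self] at this

lemma descent {n : ℕ} (Ac Δ : Matrix (Fin n) (Fin n) ℝ) (hΔ : ∀ i j, 0 ≤ Δ i j)
    (hReg : ∀ A : Matrix (Fin n) (Fin n) ℝ,
      (∀ i j, |A i j - Ac i j| ≤ Δ i j) → IsUnit A)
    (i j : Fin n) (z : Fin n → ℝ) (hz : ∀ m, |z m| ≤ 1) :
    ∀ c : ℕ, ∀ t : Fin n → ℝ, (∀ m, |t m| ≤ 1) →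
      (∀ m : Fin n, c ≤ (m : ℕ) → t m = 1 ∨ t m = -1) →
      (∃ y : Fin n → ℝ, (∀ m, y m = 1 ∨ y m = -1) ∧
        (Ac - Matrix.diagonal y * Δ * Matrix.diagonal z)⁻¹ i j
          ≤ (Ac - Matrix.diagonal t * Δ * Matrix.diagonal z)⁻¹ i j) ∧
      (∃ y : Fin n → ℝ, (∀ m, y m = 1 ∨ y m = -1) ∧
        (Ac - Matrix.diagonal t * Δ * Matrix.diagonal z)⁻¹ i j
          ≤ (Ac - Matrix.diagonal y * Δ * Matrix.diagonal z)⁻¹ i j) := by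
  intro c
  induction c with
  | zero =>
    intro t ht hsgn
    exact ⟨⟨t, fun m => hsgn m (Nat.zero_le _), le_refl _⟩,
           ⟨t, fun m => hsgn m (Nat.zero_le _), le_refl _⟩⟩
  | succ c ih =>
    intro t ht hsgn
    by_cases hc : c < n
    · set k : Fin n := ⟨c, hc⟩ with hk
      have hco := coord_bound Ac Δ hΔ hReg i j z hz t ht k
      have hbound : ∀ e : ℝ, e = 1 ∨ e = -1 → ∀ m, |Function.update t k e m| ≤ 1 := by
        intro e he m
        by_cases h : m = k
        · subst h; rw [Function.update_self]
          rcases he with he | he <;> rw [he] <;> norm_num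
        · rw [Function.update_of_ne h]; exact ht m
      have hsgn' : ∀ e : ℝ, e = 1 ∨ e = -1 →
          ∀ m : Fin n, c ≤ (m : ℕ) → Function.update t k e m = 1 ∨
            Function.update t k e m = -1 := by
        intro e he m hm
        by_cases h : m = k
        · subst h; rw [Function.update_self]; exact he
        · rw [Function.update_of_ne h]
          apply hsgn
          have : (m : ℕ) ≠ c := fun hh => h (Fin.ext hh)
          omega
      constructor
      · rcases le_total ((Ac - Matrix.diagonal (Function.update t k (-1)) * Δ *
            Matrix.diagonal z)⁻¹ i j)
            ((Ac - Matrix.diagonal (Function.update t k 1) * Δ * Matrix.diagonal z)⁻¹ i j)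
            with hle | hle
        · obtain ⟨⟨y, hy, hyl⟩, -⟩ := ih (Function.update t k (-1))
            (hbound (-1) (Or.inr rfl)) (hsgn' (-1) (Or.inr rfl))
          exact ⟨y, hy, le_trans hyl (by rw [min_eq_left hle] at hco; exact hco.1)⟩
        · obtain ⟨⟨y, hy, hyl⟩, -⟩ := ih (Function.update t k 1)
            (hbound 1 (Or.inl rfl)) (hsgn' 1 (Or.inl rfl))
          exact ⟨y, hy, le_trans hyl (by rw [min_eq_right hle] at hco; exact hco.1)⟩
      · rcases le_total ((Ac - Matrix.diagonal (Function.update t k (-1)) * Δ *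
            Matrix.diagonal z)⁻¹ i j)
            ((Ac - Matrix.diagonal (Function.update t k 1) * Δ * Matrix.diagonal z)⁻¹ i j)
            with hle | hle
        · obtain ⟨-, ⟨y, hy, hyl⟩⟩ := ih (Function.update t k 1)
            (hbound 1 (Or.inl rfl)) (hsgn' 1 (Or.inl rfl))
          exact ⟨y, hy, le_trans (by rw [max_eq_right hle] at hco; exact hco.2) hyl⟩
        · obtain ⟨-, ⟨y, hy, hyl⟩⟩ := ih (Function.update t k (-1))
            (hbound (-1) (Or.inr rfl)) (hsgn' (-1) (Or.inr rfl))
          exact ⟨y, hy, le_trans (by rw [max_eq_left hle] at hco; exact hco.2) hyl⟩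
    · apply ih t ht
      intro m hm
      exact absurd m.2 (by omega)

lemma inv_col_of_mulVec {n : ℕ} (M : Matrix (Fin n) (Fin n) ℝ) (hM : IsUnit M)
    (x : Fin n → ℝ) (j : Fin n) (h : M *ᵥ x = Pi.single j 1) :
    ∀ i, M⁻¹ i j = x i := by
  intro i
  have h2 : M⁻¹ *ᵥ (M *ᵥ x) = x := by
    rw [Matrix.mulVec_mulVec, Matrix.nonsing_inv_mul M ((Matrix.isUnit_iff_isUnit_det M).mp hM),
      Matrix.one_mulVec]
  rw [h] at h2
  have h3 : (M⁻¹ *ᵥ Pi.single j 1) i = x i := by rw [h2]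
  rw [Matrix.mulVec_single] at h3
  simpa using h3

lemma to_param {n : ℕ} (Ac Δ : Matrix (Fin n) (Fin n) ℝ) (hΔ : ∀ i j, 0 ≤ Δ i j)
    (hReg : ∀ A : Matrix (Fin n) (Fin n) ℝ,
      (∀ i j, |A i j - Ac i j| ≤ Δ i j) → IsUnit A)
    (i j : Fin n) (A : Matrix (Fin n) (Fin n) ℝ)
    (hA : ∀ k l, |A k l - Ac k l| ≤ Δ k l) :
    ∃ t z : Fin n → ℝ, (∀ m, |t m| ≤ 1) ∧ (∀ m, z m = 1 ∨ z m = -1) ∧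
      (Ac - Matrix.diagonal t * Δ * Matrix.diagonal z)⁻¹ i j = A⁻¹ i j := by
  have hU : IsUnit A := hReg A hA
  set x : Fin n → ℝ := fun m => A⁻¹ m j with hxdef
  have hx : A *ᵥ x = Pi.single j 1 := by
    have : x = A⁻¹ *ᵥ Pi.single j 1 := by
      rw [Matrix.mulVec_single]; funext m; simp [hxdef]
    rw [this, Matrix.mulVec_mulVec,
      Matrix.mul_nonsing_inv A ((Matrix.isUnit_iff_isUnit_det A).mp hU), Matrix.one_mulVec]
  set z : Fin n → ℝ := fun m => if 0 ≤ x m then 1 else -1 with hzdef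
  have hz : ∀ m, z m = 1 ∨ z m = -1 := by
    intro m; by_cases h : 0 ≤ x m
    · left; simp [hzdef, h]
    · right; simp [hzdef, h]
  have hzx : ∀ m, z m * x m = |x m| := by
    intro m; by_cases h : 0 ≤ x m
    · rw [abs_of_nonneg h]; simp [hzdef, h]
    · rw [abs_of_neg (lt_of_not_ge h)]; simp [hzdef, h]
  set den : Fin n → ℝ := fun k => ∑ l, Δ k l * |x l| with hden
  have hden0 : ∀ k, 0 ≤ den k := by
    intro k
    apply Finset.sum_nonneg
    intro l _
    exact mul_nonneg (hΔ k l) (abs_nonneg _)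
  set ρ : Fin n → ℝ := fun k => (Ac *ᵥ x) k - Pi.single (M := fun _ => ℝ) j 1 k with hρdef
  have hρ : ∀ k, |ρ k| ≤ den k := by
    intro k
    have h1 : ρ k = ∑ l, (Ac k l - A k l) * x l := by
      rw [hρdef]
      simp only [← hx]
      rw [Matrix.mulVec, Matrix.mulVec, dotProduct, dotProduct,
        ← Finset.sum_sub_distrib]
      congr 1; funext l; ring
    rw [h1]
    calc |∑ l, (Ac k l - A k l) * x l| ≤ ∑ l, |(Ac k l - A k l) * x l| :=
          Finset.abs_sum_le_sum_abs _ _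
      _ ≤ den k := by
          apply Finset.sum_le_sum
          intro l _
          rw [abs_mul]
          apply mul_le_mul_of_nonneg_right _ (abs_nonneg _)
          rw [abs_sub_comm]
          exact hA k l
  set t : Fin n → ℝ := fun k => if den k = 0 then 0 else ρ k / den k with htdef
  have ht : ∀ m, |t m| ≤ 1 := by
    intro m
    by_cases h : den m = 0
    · simp [htdef, h]
    · have hpos : 0 < den m := lt_of_le_of_ne (hden0 m) (Ne.symm h)
      simp only [htdef, if_neg h]
      rw [abs_div, abs_of_pos hpos, div_le_one hpos]
      exact hρ m
  have htρ : ∀ k, t k * den k = ρ k := by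
    intro k
    by_cases h : den k = 0
    · have : |ρ k| ≤ 0 := h ▸ hρ k
      have : ρ k = 0 := abs_nonpos_iff.mp this
      simp [htdef, h, this]
    · simp only [htdef, if_neg h]
      field_simp
  refine ⟨t, z, ht, hz, ?_⟩
  set M := Ac - Matrix.diagonal t * Δ * Matrix.diagonal z with hM
  have hzabs : ∀ m, |z m| ≤ 1 := by
    intro m; rcases hz m with h | h <;> rw [h] <;> norm_num
  have hMU : IsUnit M := hReg M (bmat_mem Ac Δ hΔ t z ht hzabs)
  have hMx : M *ᵥ x = Pi.single j 1 := by
    funext k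
    have h1 : ∀ l, M k l * x l = Ac k l * x l - t k * (Δ k l * |x l|) := by
      intro l
      rw [hM, bmat_apply, ← hzx l]
      ring
    have h2 : (M *ᵥ x) k = (Ac *ᵥ x) k - t k * den k := by
      rw [Matrix.mulVec, Matrix.mulVec, dotProduct, dotProduct, hden,
        Finset.mul_sum, ← Finset.sum_sub_distrib]
      exact Finset.sum_congr rfl fun l _ => h1 l
    rw [h2, htρ k, hρdef]
    ring
  rw [inv_col_of_mulVec M hMU x j hMx i]

/-- Exact interval inverse via boundary matrices: if the interval matrix
`[A_c - Δ, A_c + Δ]` is regular, then for each entry `(i,j)` the minimum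
(resp. maximum) of `(A⁻¹)_{ij}` over the interval matrix is attained on the
boundary matrices `A_{yz} = A_c - D_y Δ D_z` with `y, z ∈ {±1}ⁿ`. -/
theorem interval_inverse_boundary {n : ℕ} (Ac Δ : Matrix (Fin n) (Fin n) ℝ)
    (hΔ : ∀ i j, 0 ≤ Δ i j)
    (hReg : ∀ A : Matrix (Fin n) (Fin n) ℝ,
      (∀ i j, |A i j - Ac i j| ≤ Δ i j) → IsUnit A) :
    ∀ i j : Fin n,
      sInf {v : ℝ | ∃ A : Matrix (Fin n) (Fin n) ℝ,
          (∀ k l, |A k l - Ac k l| ≤ Δ k l) ∧ v = A⁻¹ i j} =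
        sInf {v : ℝ | ∃ y z : Fin n → ℝ, (∀ k, y k = 1 ∨ y k = -1) ∧
          (∀ k, z k = 1 ∨ z k = -1) ∧
          v = (Ac - Matrix.diagonal y * Δ * Matrix.diagonal z)⁻¹ i j} ∧
      sSup {v : ℝ | ∃ A : Matrix (Fin n) (Fin n) ℝ,
          (∀ k l, |A k l - Ac k l| ≤ Δ k l) ∧ v = A⁻¹ i j} =
        sSup {v : ℝ | ∃ y z : Fin n → ℝ, (∀ k, y k = 1 ∨ y k = -1) ∧
          (∀ k, z k = 1 ∨ z k = -1) ∧
          v = (Ac - Matrix.diagonal y * Δ * Matrix.diagonal z)⁻¹ i j} := by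
  intro i j
  set K : Set (Matrix (Fin n) (Fin n) ℝ) :=
    {A | ∀ k l, |A k l - Ac k l| ≤ Δ k l} with hKdef
  set S1 : Set ℝ := {v : ℝ | ∃ A : Matrix (Fin n) (Fin n) ℝ,
    (∀ k l, |A k l - Ac k l| ≤ Δ k l) ∧ v = A⁻¹ i j} with hS1def
  set S2 : Set ℝ := {v : ℝ | ∃ y z : Fin n → ℝ, (∀ k, y k = 1 ∨ y k = -1) ∧
    (∀ k, z k = 1 ∨ z k = -1) ∧
    v = (Ac - Matrix.diagonal y * Δ * Matrix.diagonal z)⁻¹ i j} with hS2def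
  -- K is compact
  have hKc : IsCompact K := by
    have h1 : K = Set.univ.pi
        (fun k => Set.univ.pi (fun l => Icc (Ac k l - Δ k l) (Ac k l + Δ k l))) := by
      ext A
      constructor
      · intro h
        refine Set.mem_univ_pi.mpr fun k => Set.mem_univ_pi.mpr fun l => Set.mem_Icc.mpr ?_
        have := abs_le.mp (h k l)
        constructor <;> linarith [this.1, this.2]
      · intro h
        intro k l
        have h2 := Set.mem_Icc.mp (Set.mem_univ_pi.mp (Set.mem_univ_pi.mp h k) l)
        rw [abs_le]
        constructor <;> linarith [h2.1, h2.2]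
    rw [h1]
    exact isCompact_univ_pi fun k => isCompact_univ_pi fun l => isCompact_Icc
  -- S1 is the image of K under a continuous function
  have hS1img : S1 = (fun A : Matrix (Fin n) (Fin n) ℝ => A.adjugate i j / A.det) '' K := by
    rw [hS1def]
    ext v
    simp only [Set.mem_setOf_eq, Set.mem_image]
    constructor
    · rintro ⟨A, hA, rfl⟩
      exact ⟨A, hA, (inv_entry_eq A i j).symm⟩
    · rintro ⟨A, hA, rfl⟩
      exact ⟨A, hA, (inv_entry_eq A i j).symm⟩
  have hcont : ContinuousOn (fun A : Matrix (Fin n) (Fin n) ℝ =>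
      A.adjugate i j / A.det) K := by
    apply ContinuousOn.div
    · exact ((continuous_id.matrix_adjugate).matrix_elem i j).continuousOn
    · exact (continuous_id.matrix_det).continuousOn
    · intro A hA
      have := hReg A hA
      rw [Matrix.isUnit_iff_isUnit_det, isUnit_iff_ne_zero] at this
      exact this
  have hS1c : IsCompact S1 := hS1img ▸ hKc.image_of_continuousOn hcont
  have hAcK : Ac ∈ K := by intro k l; simpa using hΔ k l
  have hS1ne : S1.Nonempty := ⟨Ac⁻¹ i j, Ac, hAcK, rfl⟩
  -- S2 ⊆ S1
  have hsub : S2 ⊆ S1 := by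
    rintro v ⟨y, z, hy, hz, rfl⟩
    refine ⟨Ac - Matrix.diagonal y * Δ * Matrix.diagonal z, ?_, rfl⟩
    apply bmat_mem Ac Δ hΔ y z
    · intro m; rcases hy m with h | h <;> rw [h] <;> norm_num
    · intro m; rcases hz m with h | h <;> rw [h] <;> norm_num
  have hS2ne : S2.Nonempty :=
    ⟨_, (fun _ => 1), (fun _ => 1), fun _ => Or.inl rfl, fun _ => Or.inl rfl, rfl⟩
  have hS2bb : BddBelow S2 := hS1c.bddBelow.mono hsub
  have hS2ba : BddAbove S2 := hS1c.bddAbove.mono hsub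
  constructor
  · apply le_antisymm
    · exact csInf_le_csInf hS1c.bddBelow hS2ne hsub
    · obtain ⟨A, hA, hval⟩ := hS1c.sInf_mem hS1ne
      obtain ⟨t, z, ht, hz, heq⟩ := to_param Ac Δ hΔ hReg i j A hA
      have hzabs : ∀ m, |z m| ≤ 1 := by
        intro m; rcases hz m with h | h <;> rw [h] <;> norm_num
      obtain ⟨⟨y, hy, hyl⟩, -⟩ := descent Ac Δ hΔ hReg i j z hzabs n t ht
        (fun m hm => absurd m.2 (by omega))
      calc sInf S2 ≤ (Ac - Matrix.diagonal y * Δ * Matrix.diagonal z)⁻¹ i j :=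
            csInf_le hS2bb ⟨y, z, hy, hz, rfl⟩
        _ ≤ (Ac - Matrix.diagonal t * Δ * Matrix.diagonal z)⁻¹ i j := hyl
        _ = A⁻¹ i j := heq
        _ = sInf S1 := hval.symm
  · apply le_antisymm
    · obtain ⟨A, hA, hval⟩ := hS1c.sSup_mem hS1ne
      obtain ⟨t, z, ht, hz, heq⟩ := to_param Ac Δ hΔ hReg i j A hA
      have hzabs : ∀ m, |z m| ≤ 1 := by
        intro m; rcases hz m with h | h <;> rw [h] <;> norm_num
      obtain ⟨-, ⟨y, hy, hyl⟩⟩ := descent Ac Δ hΔ hReg i j z hzabs n t ht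
        (fun m hm => absurd m.2 (by omega))
      calc sSup S1 = A⁻¹ i j := hval
        _ = (Ac - Matrix.diagonal t * Δ * Matrix.diagonal z)⁻¹ i j := heq.symm
        _ ≤ (Ac - Matrix.diagonal y * Δ * Matrix.diagonal z)⁻¹ i j := hyl
        _ ≤ sSup S2 := le_csSup hS2ba ⟨y, z, hy, hz, rfl⟩
    · exact csSup_le_csSup hS1c.bddAbove hS2ne hsub
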